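/- Let B be the r!×r! matrix with rows indexed by σ ∈ S_r and columns by tuples I = (n_1,…,n_r) with 0 ≤ n_i ≤ r−i, and entries b_{σ,I} = (−1)^{ℓ(σ)} σ(x_1^{n_1}⋯x_r^{n_r}) / Δ(x), where Δ(x) = ∏_{i<j}(x_i−x_j). Then det(B) = ± Δ(x)^{−r!/2}. -/

import Mathlib

open MvPolynomial

noncomputable section

/-- The field of rational functions in `x_1, …, x_r` (char 0). -/
abbrev RatFld (r : ℕ) : Type := FractionRing (MvPolynomial (Fin r) ℚ)

/-- The Vandermonde product `Δ(x) = ∏_{i<j} (x_i - x_j)`. -/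
def Delta (r : ℕ) : RatFld r :=
  algebraMap (MvPolynomial (Fin r) ℚ) (RatFld r)
    (∏ p ∈ Finset.univ.filter (fun p : Fin r × Fin r => p.1 < p.2),
      (X p.1 - X p.2))

/-- The entry `b_{σ,I} = (-1)^{ℓ(σ)} σ(x_1^{n_1} ⋯ x_r^{n_r}) / Δ(x)`. -/
def bEntry (r : ℕ) (σ : Equiv.Perm (Fin r)) (I : ∀ i : Fin r, Fin (r - (i : ℕ))) :
    RatFld r :=
  ((Equiv.Perm.sign σ : ℤ) : RatFld r) *
    algebraMap (MvPolynomial (Fin r) ℚ) (RatFld r)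
      (∏ i : Fin r, (X (σ i)) ^ ((I i : ℕ))) / Delta r

section Helpers

open Finset

variable {R : Type*} [CommRing R] {α : Type*} [Fintype α] [LinearOrder α] [LocallyFiniteOrderTop α]

lemma card_tup (n : ℕ) : Fintype.card (∀ i : Fin n, Fin (n - (i:ℕ))) = n.factorial := by
  rw [Fintype.card_pi]
  simp only [Fintype.card_fin]
  rw [Fin.prod_univ_eq_prod_range (fun i => n - i) n]
  rw [← Finset.prod_range_reflect (fun j => n - j) n]
  rw [← Finset.prod_range_add_one_eq_factorial]
  apply Finset.prod_congr rfl
  intro x hx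
  simp only [Finset.mem_range] at hx
  omega

lemma prod_pairs_eq (f : α → α → R) :
    ∏ i, ∏ j ∈ Finset.Ioi i, f i j
      = ∏ q ∈ Finset.univ.filter (fun q : α × α => q.1 < q.2), f q.1 q.2 := by
  rw [← Finset.prod_sigma Finset.univ (fun i => Finset.Ioi i) (fun x => f x.1 x.2)]
  apply Finset.prod_nbij (fun x => (x.1, x.2))
  · rintro ⟨i, j⟩ h
    simp only [Finset.mem_sigma, Finset.mem_Ioi, Finset.mem_filter] at h ⊢
    exact ⟨Finset.mem_univ _, h.2⟩
  · rintro ⟨i, j⟩ - ⟨i', j'⟩ - h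
    simp only [Prod.mk.injEq] at h
    aesop
  · rintro ⟨i, j⟩ h
    simp only [Finset.coe_filter, Set.mem_setOf_eq] at h
    exact ⟨⟨i, j⟩, by simpa using h.2, rfl⟩
  · intros; rfl

open Finset Equiv

def rowFun (n : ℕ) (pτ : Fin (n+1) × Equiv.Perm (Fin n)) : Equiv.Perm (Fin (n+1)) :=
  (finSuccEquiv n).trans ((Equiv.optionCongr pτ.2).trans (finSuccEquiv' pτ.1).symm)

@[simp] lemma rowFun_zero (n : ℕ) (p : Fin (n+1)) (τ : Equiv.Perm (Fin n)) :
    rowFun n (p, τ) 0 = p := by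
  simp [rowFun]

@[simp] lemma rowFun_succ (n : ℕ) (p : Fin (n+1)) (τ : Equiv.Perm (Fin n)) (i : Fin n) :
    rowFun n (p, τ) i.succ = p.succAbove (τ i) := by
  simp [rowFun]

noncomputable def rowE (n : ℕ) : (Fin (n+1) × Equiv.Perm (Fin n)) ≃ Equiv.Perm (Fin (n+1)) :=
  Equiv.ofBijective (rowFun n) <| by
    rw [Fintype.bijective_iff_injective_and_card]
    constructor
    · rintro ⟨p, τ⟩ ⟨p', τ'⟩ h
      have h0 : p = p' := by
        have := congrArg (fun σ : Equiv.Perm (Fin (n+1)) => σ 0) h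
        simpa using this
      have hs : τ = τ' := by
        ext i
        have := congrArg (fun σ : Equiv.Perm (Fin (n+1)) => σ i.succ) h
        simp only [rowFun_succ, h0] at this
        exact congrArg Fin.val (Fin.succAbove_right_injective this)
      simp [h0, hs]
    · simp [Fintype.card_perm, Nat.factorial_succ]

@[simp] lemma rowE_zero (n : ℕ) (p : Fin (n+1)) (τ : Equiv.Perm (Fin n)) :
    rowE n (p, τ) 0 = p := rowFun_zero n p τ

@[simp] lemma rowE_succ (n : ℕ) (p : Fin (n+1)) (τ : Equiv.Perm (Fin n)) (i : Fin n) :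
    rowE n (p, τ) i.succ = p.succAbove (τ i) := rowFun_succ n p τ i

def colE (n : ℕ) :
    (Fin (n+1) × (∀ i : Fin n, Fin (n - (i:ℕ)))) ≃ (∀ i : Fin (n+1), Fin (n+1 - (i:ℕ))) :=
  (Equiv.prodCongr (finCongr (by simp : n + 1 = n + 1 - ((0 : Fin (n+1)) : ℕ)))
    (Equiv.piCongrRight fun i : Fin n =>
      finCongr (by simp [Fin.val_succ] : n - (i:ℕ) = n + 1 - ((i.succ : Fin (n+1)) : ℕ)))).trans
    (Fin.consEquiv (fun i : Fin (n+1) => Fin (n+1 - (i:ℕ))))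

@[simp] lemma colE_zero_val (n : ℕ) (k : Fin (n+1)) (J : ∀ i : Fin n, Fin (n - (i:ℕ))) :
    ((colE n (k, J) 0 : ℕ)) = (k : ℕ) := by
  simp [colE, Fin.consEquiv]
  rfl

@[simp] lemma colE_succ_val (n : ℕ) (k : Fin (n+1)) (J : ∀ i : Fin n, Fin (n - (i:ℕ)))
    (i : Fin n) : ((colE n (k, J) i.succ : ℕ)) = (J i : ℕ) := by
  simp [colE, Fin.consEquiv]
  rfl

variable {R : Type*} [CommRing R]

lemma prodB (n : ℕ) (y : Fin (n+1) → R) (p : Fin (n+1)) :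
    ∏ q ∈ Finset.univ.filter (fun q : Fin n × Fin n => q.1 < q.2),
        (y (p.succAbove q.1) - y (p.succAbove q.2))
      = ∏ q ∈ Finset.univ.filter
          (fun q : Fin (n+1) × Fin (n+1) => q.1 < q.2 ∧ q.1 ≠ p ∧ q.2 ≠ p),
          (y q.1 - y q.2) := by
  apply Finset.prod_nbij (fun q => (p.succAbove q.1, p.succAbove q.2))
  · rintro ⟨a, b⟩ h
    simp only [Finset.mem_filter, Finset.mem_univ, true_and] at h ⊢
    exact ⟨(Fin.strictMono_succAbove p) h, Fin.succAbove_ne p a, Fin.succAbove_ne p b⟩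
  · rintro ⟨a, b⟩ - ⟨a', b'⟩ - h
    simp only [Prod.mk.injEq] at h
    have h1 := Fin.succAbove_right_injective (p := p) h.1
    have h2 := Fin.succAbove_right_injective (p := p) h.2
    simp [Prod.ext_iff, h1, h2]
  · rintro ⟨i, j⟩ h
    simp only [Finset.coe_filter, Set.mem_setOf_eq, Finset.mem_univ, true_and] at h
    obtain ⟨hlt, hi, hj⟩ := h
    obtain ⟨a, ha⟩ := Fin.exists_succAbove_eq hi
    obtain ⟨b, hb⟩ := Fin.exists_succAbove_eq hj
    refine ⟨⟨a, b⟩, ?_, by simp [ha, hb]⟩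
    simp only [Finset.mem_coe, Finset.mem_filter, Finset.mem_univ, true_and]
    rw [← (Fin.strictMono_succAbove p).lt_iff_lt, ha, hb]
    exact hlt
  · intros; rfl

lemma prodC (n : ℕ) (y : Fin (n+1) → R) :
    (∏ p : Fin (n+1), ∏ q ∈ Finset.univ.filter
        (fun q : Fin (n+1) × Fin (n+1) => q.1 < q.2 ∧ q.1 ≠ p ∧ q.2 ≠ p),
        (y q.1 - y q.2))
      = ∏ q ∈ Finset.univ.filter (fun q : Fin (n+1) × Fin (n+1) => q.1 < q.2),
          (y q.1 - y q.2) ^ (n - 1) := by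
  have hsplit : ∀ p : Fin (n+1),
      (Finset.univ.filter (fun q : Fin (n+1) × Fin (n+1) => q.1 < q.2 ∧ q.1 ≠ p ∧ q.2 ≠ p))
        = (Finset.univ.filter (fun q : Fin (n+1) × Fin (n+1) => q.1 < q.2)).filter
            (fun q => q.1 ≠ p ∧ q.2 ≠ p) := by
    intro p
    rw [Finset.filter_filter]
  calc (∏ p : Fin (n+1), ∏ q ∈ Finset.univ.filter
        (fun q : Fin (n+1) × Fin (n+1) => q.1 < q.2 ∧ q.1 ≠ p ∧ q.2 ≠ p), (y q.1 - y q.2))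
      = ∏ p : Fin (n+1), ∏ q ∈ Finset.univ.filter (fun q : Fin (n+1) × Fin (n+1) => q.1 < q.2),
          (if q.1 ≠ p ∧ q.2 ≠ p then (y q.1 - y q.2) else 1) := by
        apply Finset.prod_congr rfl
        intro p _
        rw [hsplit p, Finset.prod_filter]
    _ = ∏ q ∈ Finset.univ.filter (fun q : Fin (n+1) × Fin (n+1) => q.1 < q.2),
          ∏ p : Fin (n+1), (if q.1 ≠ p ∧ q.2 ≠ p then (y q.1 - y q.2) else 1) :=
        Finset.prod_comm
    _ = ∏ q ∈ Finset.univ.filter (fun q : Fin (n+1) × Fin (n+1) => q.1 < q.2),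
          (y q.1 - y q.2) ^ (n - 1) := by
        apply Finset.prod_congr rfl
        rintro ⟨i, j⟩ hq
        simp only [Finset.mem_filter, Finset.mem_univ, true_and] at hq
        have hne : i ≠ j := ne_of_lt hq
        rw [← Finset.prod_filter (fun p : Fin (n+1) => (i,j).1 ≠ p ∧ (i,j).2 ≠ p)
          (fun _ => y (i,j).1 - y (i,j).2), Finset.prod_const]
        congr 1
        have hset : Finset.univ.filter (fun p : Fin (n+1) => (i,j).1 ≠ p ∧ (i,j).2 ≠ p)
            = ({i, j} : Finset (Fin (n+1)))ᶜ := by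
          ext p
          simp [not_or, ne_comm, and_comm]
        rw [hset, Finset.card_compl, Finset.card_insert_of_notMem (by simpa using hne),
          Finset.card_singleton]
        simp

open Kronecker in
theorem keylemma (r : ℕ) : ∀ {R : Type} [CommRing R] (y : Fin r → R)
    (e : Equiv.Perm (Fin r) ≃ ∀ i : Fin r, Fin (r - (i : ℕ))),
    (Matrix.det (Matrix.of fun σ τ : Equiv.Perm (Fin r) =>
        ∏ i, y (σ i) ^ ((e τ i : ℕ)))) ^ 2
      = (∏ q ∈ Finset.univ.filter (fun q : Fin r × Fin r => q.1 < q.2),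
          (y q.1 - y q.2)) ^ r.factorial := by
  induction r with
  | zero =>
    intro R _ y e
    haveI : Subsingleton (Equiv.Perm (Fin 0)) := ⟨fun a b => Equiv.ext fun x => x.elim0⟩
    rw [Matrix.det_eq_elem_of_subsingleton _ 1]
    have hfilt : Finset.univ.filter (fun q : Fin 0 × Fin 0 => q.1 < q.2) = ∅ := by
      ext q; exact q.1.elim0
    simp [hfilt]
  | succ n ih =>
    intro R _ y e
    -- the convenient column equivalence
    let eN : Equiv.Perm (Fin n) ≃ (∀ i : Fin n, Fin (n - (i : ℕ))) :=
      Fintype.equivOfCardEq (by rw [card_tup, Fintype.card_perm, Fintype.card_fin])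
    let e₀ : Equiv.Perm (Fin (n+1)) ≃ (∀ i : Fin (n+1), Fin (n + 1 - (i : ℕ))) :=
      (rowE n).symm.trans ((Equiv.prodCongr (Equiv.refl (Fin (n+1))) eN).trans (colE n))
    let π : Equiv.Perm (Equiv.Perm (Fin (n+1))) := e.trans e₀.symm
    have hsub : (Matrix.of fun σ τ : Equiv.Perm (Fin (n+1)) =>
          ∏ i, y (σ i) ^ ((e τ i : ℕ)))
        = (Matrix.of fun σ τ : Equiv.Perm (Fin (n+1)) =>
            ∏ i, y (σ i) ^ ((e₀ τ i : ℕ))).submatrix id π := by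
      ext σ τ
      simp only [Matrix.submatrix_apply, Matrix.of_apply, id_eq, π, Equiv.trans_apply,
        Equiv.apply_symm_apply]
    have hsq : ((Equiv.Perm.sign π : ℤ) : R) ^ 2 = 1 := by
      rcases Int.units_eq_one_or (Equiv.Perm.sign π) with h | h <;> simp [h]
    rw [hsub, Matrix.det_permute', mul_pow, hsq, one_mul]
    -- reindex rows and columns by rowE
    rw [← Matrix.det_submatrix_equiv_self (rowE n)]
    -- block decomposition
    let Q : Fin (n+1) → Matrix (Equiv.Perm (Fin n)) (Equiv.Perm (Fin n)) R := fun p =>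
      Matrix.of fun τ ρ => ∏ i, y (p.succAbove (τ i)) ^ ((eN ρ i : ℕ))
    let W : Matrix (Fin (n+1)) (Fin (n+1)) R := Matrix.vandermonde y
    have hA : ((Matrix.of fun σ τ : Equiv.Perm (Fin (n+1)) =>
            ∏ i, y (σ i) ^ ((e₀ τ i : ℕ))).submatrix (rowE n) (rowE n))
        = ((Matrix.blockDiagonal fun p => Q p).submatrix
              (Equiv.prodComm (Fin (n+1)) (Equiv.Perm (Fin n)))
              (Equiv.prodComm (Fin (n+1)) (Equiv.Perm (Fin n))))
          * (W ⊗ₖ (1 : Matrix (Equiv.Perm (Fin n)) (Equiv.Perm (Fin n)) R)) := by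
      ext ⟨p, τ⟩ ⟨k, ρ⟩
      have he₀ : e₀ (rowE n (k, ρ)) = colE n (k, eN ρ) := by
        simp only [e₀, Equiv.trans_apply, Equiv.symm_apply_apply, Equiv.prodCongr_apply,
          Equiv.coe_refl, Prod.map_apply, id_eq]
      rw [Matrix.mul_apply, Fintype.sum_prod_type]
      simp only [Matrix.submatrix_apply, Matrix.of_apply, he₀, Matrix.kroneckerMap_apply,
        Equiv.prodComm_apply, Prod.swap_prod_mk, Matrix.blockDiagonal_apply,
        Matrix.one_apply]
      rw [Fin.prod_univ_succ]
      simp only [rowE_zero, rowE_succ, colE_zero_val, colE_succ_val]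
      rw [Finset.sum_eq_single p]
      · rw [Finset.sum_eq_single ρ]
        · simp [Q, W, Matrix.vandermonde, mul_comm]
        · intro b _ hb; simp [hb]
        · intro h; exact absurd (Finset.mem_univ ρ) h
      · intro q _ hq; simp [Ne.symm hq]
      · intro h; exact absurd (Finset.mem_univ p) h
    rw [hA, Matrix.det_mul, Matrix.det_submatrix_equiv_self, Matrix.det_blockDiagonal,
      Matrix.det_kronecker, Matrix.det_one, one_pow, mul_one, Fintype.card_perm,
      Fintype.card_fin]
    -- now: ((∏ p, (Q p).det) * W.det ^ n !) ^ 2 = Δ ^ (n+1)!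
    have hQ : ∀ p : Fin (n+1), ((Q p).det) ^ 2
        = (∏ q ∈ Finset.univ.filter
            (fun q : Fin (n+1) × Fin (n+1) => q.1 < q.2 ∧ q.1 ≠ p ∧ q.2 ≠ p),
            (y q.1 - y q.2)) ^ n.factorial := by
      intro p
      rw [ih (fun a => y (p.succAbove a)) eN, prodB]
    have hW : (W.det) ^ 2 = (∏ q ∈ Finset.univ.filter
        (fun q : Fin (n+1) × Fin (n+1) => q.1 < q.2), (y q.1 - y q.2)) ^ 2 := by
      have h1 : W.det = ∏ q ∈ Finset.univ.filter
          (fun q : Fin (n+1) × Fin (n+1) => q.1 < q.2), (y q.2 - y q.1) := by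
        rw [Matrix.det_vandermonde, prod_pairs_eq (fun i j => y j - y i)]
      have h2 : ∏ q ∈ Finset.univ.filter
          (fun q : Fin (n+1) × Fin (n+1) => q.1 < q.2), (y q.2 - y q.1)
          = (-1 : R) ^ (Finset.univ.filter
              (fun q : Fin (n+1) × Fin (n+1) => q.1 < q.2)).card
            * ∏ q ∈ Finset.univ.filter
              (fun q : Fin (n+1) × Fin (n+1) => q.1 < q.2), (y q.1 - y q.2) := by
        rw [← Finset.prod_const, ← Finset.prod_mul_distrib]
        exact Finset.prod_congr rfl fun q _ => by ring
      rw [h1, h2, mul_pow, ← pow_mul, mul_comm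
        (#(Finset.univ.filter (fun q : Fin (n+1) × Fin (n+1) => q.1 < q.2))) 2, pow_mul,
        neg_one_sq, one_pow, one_mul]
    rw [mul_pow, ← Finset.prod_pow]
    rw [Finset.prod_congr rfl fun p _ => hQ p]
    rw [Finset.prod_pow, prodC, Finset.prod_pow, ← pow_mul, ← pow_mul]
    set Δ' : R := ∏ q ∈ Finset.univ.filter
        (fun q : Fin (n+1) × Fin (n+1) => q.1 < q.2), (y q.1 - y q.2) with hΔ'
    have hW2 : W.det ^ (n.factorial * 2) = Δ' ^ (2 * n.factorial) := by
      rw [mul_comm, pow_mul, hW, ← pow_mul]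
    rw [hW2, ← pow_add]
    rcases Nat.eq_zero_or_pos n with h0 | hpos
    · subst h0
      have hone : Δ' = 1 := by
        apply Finset.prod_eq_one
        rintro ⟨a, b⟩ hb
        simp only [Finset.mem_filter] at hb
        have h1 := a.2
        have h2 := b.2
        have h3 := Fin.lt_def.mp hb.2
        omega
      simp [hone]
    · congr 1
      rw [Nat.factorial_succ, ← add_mul]
      congr 1
      omega

end Helpers

/-- **Determinant of the monomial matrix `B`.**
The `r! × r!` matrix with rows indexed by `σ ∈ S_r`, columns indexed (via any
bijection `e`) by exponent tuples `(n_1,…,n_r)` with `0 ≤ n_i ≤ r - i`, and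
entries `b_{σ,I} = (-1)^{ℓ(σ)} σ(x^I)/Δ(x)`, has determinant `± Δ(x)^{-r!/2}`
(the sign depending on the chosen ordering of rows and columns). -/
theorem stmt5 (r : ℕ)
    (e : Equiv.Perm (Fin r) ≃ (∀ i : Fin r, Fin (r - (i : ℕ)))) :
    Matrix.det (Matrix.of fun σ τ : Equiv.Perm (Fin r) => bEntry r σ (e τ)) =
        (Delta r)⁻¹ ^ (Nat.factorial r / 2) ∨
      Matrix.det (Matrix.of fun σ τ : Equiv.Perm (Fin r) => bEntry r σ (e τ)) =
        -((Delta r)⁻¹ ^ (Nat.factorial r / 2)) := by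
  set K := MvPolynomial (Fin r) ℚ
  set L := RatFld r
  set f := algebraMap K L with hf
  set Δp : K := ∏ p ∈ Finset.univ.filter (fun p : Fin r × Fin r => p.1 < p.2),
      (X p.1 - X p.2) with hΔp
  have hD : Delta r = f Δp := rfl
  have hΔp0 : Δp ≠ 0 := by
    rw [hΔp, Finset.prod_ne_zero_iff]
    rintro ⟨i, j⟩ hij
    simp only [Finset.mem_filter] at hij
    exact sub_ne_zero_of_ne (fun h => absurd (MvPolynomial.X_injective h) (ne_of_lt hij.2))
  have hΔ0 : Delta r ≠ 0 := by
    rw [hD]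
    exact fun h => hΔp0 ((map_eq_zero_iff f (IsFractionRing.injective K L)).mp h)
  -- factor the matrix
  have hBeq : (Matrix.of fun σ τ : Equiv.Perm (Fin r) => bEntry r σ (e τ))
      = Matrix.of (fun σ τ : Equiv.Perm (Fin r) =>
          (((Equiv.Perm.sign σ : ℤ) : L) * (Delta r)⁻¹) *
            (Matrix.of fun σ τ : Equiv.Perm (Fin r) =>
              ∏ i, (X (σ i) : K) ^ ((e τ i : ℕ))).map f σ τ) := by
    ext σ τ
    simp only [Matrix.of_apply, bEntry, Matrix.map_apply]
    rw [div_eq_mul_inv]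
    ring
  have hdet : Matrix.det (Matrix.of fun σ τ : Equiv.Perm (Fin r) => bEntry r σ (e τ))
      = (∏ σ : Equiv.Perm (Fin r), (((Equiv.Perm.sign σ : ℤ) : L) * (Delta r)⁻¹)) *
          f (Matrix.det (Matrix.of fun σ τ : Equiv.Perm (Fin r) =>
              ∏ i, (X (σ i) : K) ^ ((e τ i : ℕ)))) := by
    rw [hBeq, Matrix.det_mul_column, RingHom.map_det, RingHom.mapMatrix_apply]
  have hsq : (Matrix.det (Matrix.of fun σ τ : Equiv.Perm (Fin r) => bEntry r σ (e τ))) ^ 2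
      = ((Delta r)⁻¹) ^ (2 * r.factorial) * (Delta r) ^ r.factorial := by
    rw [hdet, mul_pow, ← map_pow, keylemma r (fun i => (X i : K)) e, ← hΔp]
    have h1 : (∏ σ : Equiv.Perm (Fin r), (((Equiv.Perm.sign σ : ℤ) : L) * (Delta r)⁻¹)) ^ 2
        = ((Delta r)⁻¹) ^ (2 * r.factorial) := by
      rw [← Finset.prod_pow]
      have : ∀ σ : Equiv.Perm (Fin r),
          ((((Equiv.Perm.sign σ : ℤ) : L) * (Delta r)⁻¹)) ^ 2 = ((Delta r)⁻¹) ^ 2 := by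
        intro σ
        rcases Int.units_eq_one_or (Equiv.Perm.sign σ) with h | h <;>
          rw [h] <;> push_cast <;> ring
      rw [Finset.prod_congr rfl fun σ _ => this σ, Finset.prod_const, ← pow_mul,
        Finset.card_univ, Fintype.card_perm, Fintype.card_fin, mul_comm]
    rw [h1, map_pow, ← hD]
  have hhalf : (((Delta r)⁻¹) ^ (r.factorial / 2)) ^ 2
      = ((Delta r)⁻¹) ^ (2 * r.factorial) * (Delta r) ^ r.factorial := by
    rcases le_or_gt 2 r with hr | hr
    · have h2 : r.factorial / 2 * 2 = r.factorial :=
        Nat.div_mul_cancel (Nat.dvd_factorial (by norm_num) hr)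
      rw [← pow_mul, h2]
      rw [two_mul, pow_add, mul_assoc, ← mul_pow, inv_mul_cancel₀ hΔ0, one_pow, mul_one]
    · have hone : Delta r = 1 := by
        rw [hD]
        have : Δp = 1 := by
          rw [hΔp]
          apply Finset.prod_eq_one
          rintro ⟨a, b⟩ hb
          simp only [Finset.mem_filter] at hb
          have h1 := a.2
          have h2 := b.2
          have h3 := Fin.lt_def.mp hb.2
          omega
        rw [this, map_one]
      simp [hone]
  have : Matrix.det (Matrix.of fun σ τ : Equiv.Perm (Fin r) => bEntry r σ (e τ)) *
        Matrix.det (Matrix.of fun σ τ : Equiv.Perm (Fin r) => bEntry r σ (e τ))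
      = (((Delta r)⁻¹) ^ (r.factorial / 2)) * (((Delta r)⁻¹) ^ (r.factorial / 2)) := by
    rw [← pow_two, ← pow_two, hsq, hhalf]
  exact mul_self_eq_mul_self_iff.mp this


end
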